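/- Work in ℝⁿ with the Euclidean inner product. Let m, K be positive integers, let f_{i,r} ∈ ℝⁿ be unit vectors and c_{i,r} ∈ ℝ for i ∈ {1,…,m}, r ∈ {1,…,K}, let ℋ_{i,r} = {x : ⟨x, f_{i,r}⟩ ≤ c_{i,r}} and H_{i,r} = {x : ⟨x, f_{i,r}⟩ = c_{i,r}}, and suppose C := ∩_{i,r} ℋ_{i,r} is nonempty. Let d ∈ ℝⁿ satisfy P_C(d) = 0. Then for every δ₁ > 0 there exists δ₂ > 0 with the following property: for all nonnegative scalars (λ_{i,r}), setting x = d − Σ_{i,r} λ_{i,r} f_{i,r}, if ‖x‖ > δ₁ then max_{i,r} max{ dist(x, ℋ_{i,r}), min(dist(x, H_{i,r}), λ_{i,r}) } > δ₂. (Proposition 7.2: the dual-decrease estimate is bounded below when the primal iterate is bounded away from the solution.) -/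

import Mathlib

open scoped RealInnerProductSpace

open Filter

section Aux

variable {n : ℕ}

private lemma inner_sub_le_of_infDist_le' {x y0 : EuclideanSpace ℝ (Fin n)}
    {g : EuclideanSpace ℝ (Fin n)} (hg : ‖g‖ = 1) {c δ : ℝ}
    (hy0 : ⟪y0, g⟫ ≤ c)
    (h : Metric.infDist x {z : EuclideanSpace ℝ (Fin n) | ⟪z, g⟫ ≤ c} ≤ δ) :
    ⟪x, g⟫ - c ≤ δ := by
  refine le_of_forall_pos_le_add (fun η hη => ?_)
  have hne : {z : EuclideanSpace ℝ (Fin n) | ⟪z, g⟫ ≤ c}.Nonempty := ⟨y0, hy0⟩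
  obtain ⟨y, hy, hdy⟩ := (Metric.infDist_lt_iff hne).1 (h.trans_lt (lt_add_of_pos_right _ hη))
  have hyc : ⟪y, g⟫ ≤ c := hy
  have h1 : ⟪x, g⟫ - ⟪y, g⟫ ≤ ‖x - y‖ := by
    have := real_inner_le_norm (x - y) g
    rwa [inner_sub_left, hg, mul_one] at this
  have h2 : ‖x - y‖ = dist x y := (dist_eq_norm x y).symm
  linarith [h2 ▸ h1]

private lemma abs_inner_sub_le_of_infDist_le' {x : EuclideanSpace ℝ (Fin n)}
    {g : EuclideanSpace ℝ (Fin n)} (hg : ‖g‖ = 1) {c δ : ℝ}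
    (h : Metric.infDist x {z : EuclideanSpace ℝ (Fin n) | ⟪z, g⟫ = c} ≤ δ) :
    |⟪x, g⟫ - c| ≤ δ := by
  refine le_of_forall_pos_le_add (fun η hη => ?_)
  have hne : {z : EuclideanSpace ℝ (Fin n) | ⟪z, g⟫ = c}.Nonempty := by
    refine ⟨c • g, ?_⟩
    simp only [Set.mem_setOf_eq, real_inner_smul_left]
    rw [real_inner_self_eq_norm_sq, hg]; ring
  obtain ⟨y, hy, hdy⟩ := (Metric.infDist_lt_iff hne).1 (h.trans_lt (lt_add_of_pos_right _ hη))
  have hyc : ⟪y, g⟫ = c := hy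
  have h1 : |⟪x - y, g⟫| ≤ ‖x - y‖ := by
    have := abs_real_inner_le_norm (x - y) g
    rwa [hg, mul_one] at this
  have h2 : ⟪x - y, g⟫ = ⟪x, g⟫ - c := by rw [inner_sub_left, hyc]
  rw [← h2]
  calc |⟪x - y, g⟫| ≤ ‖x - y‖ := h1
    _ = dist x y := (dist_eq_norm x y).symm
    _ ≤ δ + η := le_of_lt hdy

private lemma aux {n m K : ℕ}
    (f : Fin m → Fin K → EuclideanSpace ℝ (Fin n)) (hf : ∀ i r, ‖f i r‖ = 1)
    (c : Fin m → Fin K → ℝ) (d : EuclideanSpace ℝ (Fin n))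
    (hc : ∀ i r, 0 ≤ c i r)
    (hproj : ∀ z : EuclideanSpace ℝ (Fin n), (∀ i r, ⟪z, f i r⟫ ≤ c i r) → ‖d‖ ≤ ‖d - z‖)
    (δ₁ : ℝ) (hδ₁ : 0 < δ₁)
    (lam : ℕ → Fin m → Fin K → ℝ) (hnn : ∀ k i r, 0 ≤ lam k i r)
    (hx : ∀ k, δ₁ < ‖d - ∑ i, ∑ r, lam k i r • f i r‖)
    (hs : ∀ k i r, ⟪d - ∑ i, ∑ r, lam k i r • f i r, f i r⟫ - c i r ≤ ((k : ℝ) + 1)⁻¹)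
    (halt : ∀ k i r, lam k i r ≤ ((k : ℝ) + 1)⁻¹ ∨
      |⟪d - ∑ i, ∑ r, lam k i r • f i r, f i r⟫ - c i r| ≤ ((k : ℝ) + 1)⁻¹) : False := by
  classical
  set x : ℕ → EuclideanSpace ℝ (Fin n) := fun k => d - ∑ i, ∑ r, lam k i r • f i r with hxdef
  set ε : ℕ → ℝ := fun k => ((k : ℝ) + 1)⁻¹ with hεdef
  have hε : ∀ k, 0 < ε k := fun k => by positivity
  have hεmono : Antitone ε := by
    intro a b hab
    exact inv_anti₀ (by positivity) (by exact_mod_cast by exact_mod_cast add_le_add (Nat.cast_le.2 hab) (le_refl 1))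
  have hεlim : Tendsto ε atTop (nhds 0) := by
    simpa [hεdef, one_div] using tendsto_one_div_add_atTop_nhds_zero_nat (𝕜 := ℝ)
  have hε1 : ∀ k, ε k ≤ 1 := fun k =>
    inv_le_one_of_one_le₀ (by push_cast; linarith [Nat.cast_nonneg (α := ℝ) k])
  -- expansion of inner products with d - x k
  have hexp : ∀ (y : EuclideanSpace ℝ (Fin n)) (k), ⟪y, d - x k⟫ = ∑ i, ∑ r, lam k i r * ⟪y, f i r⟫ := by
    intro y k
    have hdx : d - x k = ∑ i, ∑ r, lam k i r • f i r := sub_sub_cancel _ _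
    rw [hdx, inner_sum]
    refine Finset.sum_congr rfl fun i _ => ?_
    rw [inner_sum]
    exact Finset.sum_congr rfl fun r _ => real_inner_smul_right _ _ _
  -- the set of "large multiplier" indices stabilizes along a subsequence
  set B : ℕ → Finset (Fin m × Fin K) :=
    fun k => Finset.univ.filter (fun p => ε k < lam k p.1 p.2) with hBdef
  obtain ⟨B₀, hB₀⟩ := Finite.exists_infinite_fiber B
  rw [Set.infinite_coe_iff] at hB₀
  have hB₀' : {k | B k = B₀}.Infinite := hB₀
  set g : ℕ → ℕ := Nat.nth (fun k => B k = B₀) with hgdef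
  have hgB : ∀ k, B (g k) = B₀ := fun k => Nat.nth_mem_of_infinite hB₀' k
  have hgmono : StrictMono g := Nat.nth_strictMono hB₀'
  have hgk : ∀ k, k ≤ g k := fun k => hgmono.le_apply
  have hmemB : ∀ j (i : Fin m) (r : Fin K), (i, r) ∈ B₀ →
      |⟪x (g j), f i r⟫ - c i r| ≤ ε (g j) := by
    intro j i r hir
    have hmem : (i, r) ∈ B (g j) := by rw [hgB j]; exact hir
    have hlam : ε (g j) < lam (g j) i r := by
      simpa [hBdef] using hmem
    rcases halt (g j) i r with h | h
    · exact absurd h (not_le.2 hlam)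
    · simpa [hxdef, hεdef] using h
  have hnmemB : ∀ j (i : Fin m) (r : Fin K), (i, r) ∉ B₀ →
      lam (g j) i r ≤ ε (g j) := by
    intro j i r hir
    have hmem : (i, r) ∉ B (g j) := by rw [hgB j]; exact hir
    simpa [hBdef] using hmem
  by_cases hbdd : ∃ R, {k | ‖x (g k)‖ ≤ R}.Infinite
  · -- bounded case : extract a convergent subsequence
    obtain ⟨R, hR⟩ := hbdd
    set h2 : ℕ → ℕ := Nat.nth (fun k => ‖x (g k)‖ ≤ R) with hh2def
    have hh2mem : ∀ k, ‖x (g (h2 k))‖ ≤ R := fun k => Nat.nth_mem_of_infinite hR k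
    have hh2mono : StrictMono h2 := Nat.nth_strictMono hR
    have hy : ∀ k, x (g (h2 k)) ∈ Metric.closedBall (0 : EuclideanSpace ℝ (Fin n)) R := by
      intro k; rw [Metric.mem_closedBall, dist_zero_right]; exact hh2mem k
    obtain ⟨xb, hxbmem, φ, hφ, hlim⟩ := (isCompact_closedBall (0 : EuclideanSpace ℝ (Fin n)) R).tendsto_subseq hy
    set σ : ℕ → ℕ := fun k => h2 (φ k) with hσdef
    have hσk : ∀ k, k ≤ σ k := fun k => le_trans hφ.le_apply hh2mono.le_apply
    have hεσ : ∀ k, ε (g (σ k)) ≤ ε k := fun k => hεmono (le_trans (hσk k) (hgk _))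
    have hlim' : Tendsto (fun k => x (g (σ k))) atTop (nhds xb) := hlim
    -- the limit point lies in C
    have hxbC : ∀ i r, ⟪xb, f i r⟫ ≤ c i r := by
      intro i r
      have h1 : Tendsto (fun k => ⟪x (g (σ k)), f i r⟫) atTop (nhds ⟪xb, f i r⟫) :=
        hlim'.inner tendsto_const_nhds
      have h2' : Tendsto (fun k => c i r + ε k) atTop (nhds (c i r + 0)) :=
        tendsto_const_nhds.add hεlim
      rw [add_zero] at h2'
      refine le_of_tendsto_of_tendsto h1 h2' (Eventually.of_forall fun k => ?_)
      have := hs (g (σ k)) i r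
      have h3 : ε (g (σ k)) ≤ ε k := hεσ k
      simp only [hxdef, hεdef] at this ⊢
      linarith
    -- active constraints in the limit
    have hxbB : ∀ i r, (i, r) ∈ B₀ → ⟪xb, f i r⟫ = c i r := by
      intro i r hir
      have h1 : Tendsto (fun k => |⟪x (g (σ k)), f i r⟫ - c i r|) atTop
          (nhds |⟪xb, f i r⟫ - c i r|) :=
        ((hlim'.inner tendsto_const_nhds).sub tendsto_const_nhds).abs
      have h2' : |⟪xb, f i r⟫ - c i r| ≤ 0 := by
        refine le_of_tendsto_of_tendsto h1 hεlim (Eventually.of_forall fun k => ?_)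
        exact (hmemB (σ k) i r hir).trans (hεσ k)
      have := abs_nonneg (⟪xb, f i r⟫ - c i r)
      have h3 : ⟪xb, f i r⟫ - c i r = 0 := abs_eq_zero.1 (le_antisymm h2' this)
      linarith
    -- the limit point is far from 0
    have hxbnorm : δ₁ ≤ ‖xb‖ := by
      refine le_of_tendsto_of_tendsto tendsto_const_nhds hlim'.norm
        (Eventually.of_forall fun k => (hx (g (σ k))).le)
    -- ⟪xb, d - xb⟫ ≥ 0
    have hge : 0 ≤ ⟪xb, d - xb⟫ := by
      have hA : Tendsto (fun k => ⟪xb, d - x (g (σ k))⟫) atTop (nhds ⟪xb, d - xb⟫) :=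
        tendsto_const_nhds.inner (tendsto_const_nhds.sub hlim')
      have hL : Tendsto (fun k => (-((m : ℝ) * K * ‖xb‖)) * ε k) atTop (nhds 0) := by
        have := hεlim.const_mul (-((m : ℝ) * K * ‖xb‖))
        simpa using this
      refine le_of_tendsto_of_tendsto hL hA (Eventually.of_forall fun k => ?_)
      dsimp only
      rw [hexp xb (g (σ k))]
      have hterm : ∀ i r, -(‖xb‖ * ε k) ≤ lam (g (σ k)) i r * ⟪xb, f i r⟫ := by
        intro i r
        by_cases hir : (i, r) ∈ B₀
        · rw [hxbB i r hir]
          have : 0 ≤ lam (g (σ k)) i r * c i r := mul_nonneg (hnn _ _ _) (hc i r)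
          nlinarith [hε k, norm_nonneg xb]
        · have hlam : lam (g (σ k)) i r ≤ ε k := (hnmemB (σ k) i r hir).trans (hεσ k)
          have habs : |⟪xb, f i r⟫| ≤ ‖xb‖ := by
            have := abs_real_inner_le_norm xb (f i r)
            rwa [hf i r, mul_one] at this
          have h1 : -‖xb‖ ≤ ⟪xb, f i r⟫ := by
            rw [abs_le] at habs; exact habs.1
          nlinarith [hnn (g (σ k)) i r, hε k, norm_nonneg xb]
      calc (-((m : ℝ) * K * ‖xb‖)) * ε k
          = ∑ _i : Fin m, ∑ _r : Fin K, -(‖xb‖ * ε k) := by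
            simp [Finset.sum_const, Finset.card_univ]; try ring
        _ ≤ ∑ i, ∑ r, lam (g (σ k)) i r * ⟪xb, f i r⟫ :=
            Finset.sum_le_sum fun i _ => Finset.sum_le_sum fun r _ => hterm i r
    -- combine with the projection inequality
    have h1 : ‖d‖ ≤ ‖d - xb‖ := hproj xb hxbC
    have h2' : ‖d - xb‖ ^ 2 = ‖d‖ ^ 2 - 2 * ⟪d, xb⟫ + ‖xb‖ ^ 2 := norm_sub_sq_real d xb
    have h3 : ‖d‖ ^ 2 ≤ ‖d - xb‖ ^ 2 := pow_le_pow_left₀ (norm_nonneg d) h1 2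
    have h4 : ⟪xb, d - xb⟫ = ⟪xb, d⟫ - ‖xb‖ ^ 2 := by
      rw [inner_sub_right, real_inner_self_eq_norm_sq]
    have h5 : ⟪d, xb⟫ = ⟪xb, d⟫ := real_inner_comm xb d
    have hδsq : δ₁ ^ 2 ≤ ‖xb‖ ^ 2 := by nlinarith
    nlinarith
  · -- unbounded case
    push_neg at hbdd
    have htop : Tendsto (fun k => ‖x (g k)‖) atTop atTop := by
      rw [tendsto_atTop]
      intro R
      have hfin : {k | ‖x (g k)‖ ≤ R}.Finite := hbdd R
      have := hfin.eventually_cofinite_notMem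
      rw [Nat.cofinite_eq_atTop] at this
      filter_upwards [this] with k hk
      exact (not_le.1 hk).le
    have hxpos : ∀ k, 0 < ‖x (g k)‖ := fun k => lt_trans hδ₁ (hx (g k))
    set v : ℕ → EuclideanSpace ℝ (Fin n) := fun k => ‖x (g k)‖⁻¹ • x (g k) with hvdef
    have hv1 : ∀ k, ‖v k‖ = 1 := by
      intro k
      rw [hvdef]
      simp only [norm_smul, norm_inv, norm_norm]
      exact inv_mul_cancel₀ (ne_of_gt (hxpos k))
    have hvmem : ∀ k, v k ∈ Metric.closedBall (0 : EuclideanSpace ℝ (Fin n)) 1 := by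
      intro k; rw [Metric.mem_closedBall, dist_zero_right, hv1 k]
    obtain ⟨vb, hvbmem, φ, hφ, hvlim⟩ := (isCompact_closedBall (0 : EuclideanSpace ℝ (Fin n)) 1).tendsto_subseq hvmem
    have hvlim' : Tendsto (fun k => v (φ k)) atTop (nhds vb) := hvlim
    have htop' : Tendsto (fun k => ‖x (g (φ k))‖) atTop atTop := htop.comp hφ.tendsto_atTop
    have hvbnorm : ‖vb‖ = 1 := by
      have h1 : Tendsto (fun k => ‖v (φ k)‖) atTop (nhds ‖vb‖) := hvlim'.norm
      have h2 : Tendsto (fun k => ‖v (φ k)‖) atTop (nhds 1) := by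
        simpa [hv1] using tendsto_const_nhds (α := ℝ) (f := atTop (α := ℕ)) (a := 1)
      exact tendsto_nhds_unique h1 h2
    -- limit direction is orthogonal to the active constraints
    have hvbB : ∀ i r, (i, r) ∈ B₀ → ⟪vb, f i r⟫ = 0 := by
      intro i r hir
      have h1 : Tendsto (fun k => |⟪v (φ k), f i r⟫|) atTop (nhds |⟪vb, f i r⟫|) :=
        (hvlim'.inner tendsto_const_nhds).abs
      have hb : ∀ k, |⟪v (φ k), f i r⟫| ≤ ‖x (g (φ k))‖⁻¹ * (1 + |c i r|) := by
        intro k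
        have hinner : ⟪v (φ k), f i r⟫ = ‖x (g (φ k))‖⁻¹ * ⟪x (g (φ k)), f i r⟫ := by
          rw [hvdef]; exact real_inner_smul_left _ _ _
        have habs : |⟪x (g (φ k)), f i r⟫ - c i r| ≤ 1 :=
          (hmemB (φ k) i r hir).trans (hε1 _)
        have h3 : |⟪x (g (φ k)), f i r⟫| ≤ 1 + |c i r| := by
          have := abs_sub_abs_le_abs_sub (⟪x (g (φ k)), f i r⟫) (c i r)
          linarith
        rw [hinner, abs_mul, abs_inv, abs_norm]
        exact mul_le_mul_of_nonneg_left h3 (inv_nonneg.2 (norm_nonneg _))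
      have h2 : Tendsto (fun k => ‖x (g (φ k))‖⁻¹ * (1 + |c i r|)) atTop (nhds 0) := by
        have := htop'.inv_tendsto_atTop
        simpa using this.mul_const (1 + |c i r|)
      have h3 : |⟪vb, f i r⟫| ≤ 0 :=
        le_of_tendsto_of_tendsto h1 h2 (Eventually.of_forall hb)
      exact abs_eq_zero.1 (le_antisymm h3 (abs_nonneg _))
    -- ⟪vb, x (g (φ k))⟫ is bounded above
    have hub : ∀ k, ⟪vb, x (g (φ k))⟫ ≤ ⟪vb, d⟫ + (m : ℝ) * K := by
      intro k
      have hexp' := hexp vb (g (φ k))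
      have hterm : ∀ i r, -1 ≤ lam (g (φ k)) i r * ⟪vb, f i r⟫ := by
        intro i r
        by_cases hir : (i, r) ∈ B₀
        · rw [hvbB i r hir, mul_zero]; norm_num
        · have hlam : lam (g (φ k)) i r ≤ 1 := (hnmemB (φ k) i r hir).trans (hε1 _)
          have habs : |⟪vb, f i r⟫| ≤ 1 := by
            have := abs_real_inner_le_norm vb (f i r)
            rwa [hf i r, mul_one, hvbnorm] at this
          rw [abs_le] at habs
          nlinarith [hnn (g (φ k)) i r, habs.1, habs.2]
      have hsum : -(((m : ℝ)) * K) ≤ ⟪vb, d - x (g (φ k))⟫ := by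
        rw [hexp']
        calc -(((m : ℝ)) * K) = ∑ _i : Fin m, ∑ _r : Fin K, (-1 : ℝ) := by
              simp [Finset.sum_const, Finset.card_univ]; try ring
          _ ≤ ∑ i, ∑ r, lam (g (φ k)) i r * ⟪vb, f i r⟫ :=
              Finset.sum_le_sum fun i _ => Finset.sum_le_sum fun r _ => hterm i r
      have hsplit : ⟪vb, d - x (g (φ k))⟫ = ⟪vb, d⟫ - ⟪vb, x (g (φ k))⟫ := inner_sub_right _ _ _
      rw [hsplit] at hsum
      linarith
    -- but it tends to infinity
    have hxv : ∀ k, ⟪vb, x (g (φ k))⟫ = ‖x (g (φ k))‖ * ⟪vb, v (φ k)⟫ := by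
      intro k
      have hv' : x (g (φ k)) = ‖x (g (φ k))‖ • v (φ k) := by
        rw [hvdef, smul_smul, mul_inv_cancel₀ (ne_of_gt (hxpos (φ k))), one_smul]
      conv_lhs => rw [hv']
      rw [real_inner_smul_right]
    have hinlim : Tendsto (fun k => ⟪vb, v (φ k)⟫) atTop (nhds 1) := by
      have h1 : Tendsto (fun k => ⟪vb, v (φ k)⟫) atTop (nhds ⟪vb, vb⟫) :=
        tendsto_const_nhds.inner hvlim'
      have h2 : ⟪vb, vb⟫ = 1 := by
        rw [real_inner_self_eq_norm_sq, hvbnorm]; norm_num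
      rwa [h2] at h1
    have hmul : Tendsto (fun k => ‖x (g (φ k))‖ * ⟪vb, v (φ k)⟫) atTop atTop :=
      Tendsto.atTop_mul_pos one_pos htop' hinlim
    obtain ⟨k, hk⟩ := (tendsto_atTop.mp hmul (⟪vb, d⟫ + (m : ℝ) * K + 1)).exists
    have := hub k
    rw [hxv k] at this
    linarith

end Aux

/-- Proposition 7.2: in `ℝⁿ`, if the point `x = d − ∑_{i,r} λ_{i,r} f_{i,r}`
(with nonnegative multipliers) is bounded away from the solution `P_C(d) = 0`,
then the dual-decrease estimate
`max_{i,r} max{dist(x, ℋ_{i,r}), min(dist(x, H_{i,r}), λ_{i,r})}`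
is bounded below by a positive constant. -/
theorem dual_decrease_bounded_below {n m K : ℕ} (hm : 0 < m) (hK : 0 < K)
    (f : Fin m → Fin K → EuclideanSpace ℝ (Fin n)) (hf : ∀ i r, ‖f i r‖ = 1)
    (c : Fin m → Fin K → ℝ) (d : EuclideanSpace ℝ (Fin n))
    (hCne : (⋂ i, ⋂ r, {z : EuclideanSpace ℝ (Fin n) | ⟪z, f i r⟫ ≤ c i r}).Nonempty)
    (hmem : (0 : EuclideanSpace ℝ (Fin n)) ∈
      ⋂ i, ⋂ r, {z : EuclideanSpace ℝ (Fin n) | ⟪z, f i r⟫ ≤ c i r})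
    (hproj : ∀ z ∈ ⋂ i, ⋂ r, {z : EuclideanSpace ℝ (Fin n) | ⟪z, f i r⟫ ≤ c i r},
      ‖d - 0‖ ≤ ‖d - z‖) :
    ∀ δ₁ > (0 : ℝ), ∃ δ₂ > (0 : ℝ), ∀ lam : Fin m → Fin K → ℝ,
      (∀ i r, 0 ≤ lam i r) →
      δ₁ < ‖d - ∑ i, ∑ r, lam i r • f i r‖ →
      ∃ i r, δ₂ <
        max (Metric.infDist (d - ∑ i, ∑ r, lam i r • f i r)
              {z : EuclideanSpace ℝ (Fin n) | ⟪z, f i r⟫ ≤ c i r})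
            (min (Metric.infDist (d - ∑ i, ∑ r, lam i r • f i r)
              {z : EuclideanSpace ℝ (Fin n) | ⟪z, f i r⟫ = c i r}) (lam i r)) := by
  intro δ₁ hδ₁
  by_contra hcon
  push_neg at hcon
  -- hcon : ∀ δ₂ > 0, ∃ lam, ...
  have hc : ∀ i r, 0 ≤ c i r := by
    intro i r
    have := Set.mem_iInter.1 (Set.mem_iInter.1 hmem i) r
    simpa [inner_zero_left] using this
  have hproj' : ∀ z : EuclideanSpace ℝ (Fin n),
      (∀ i r, ⟪z, f i r⟫ ≤ c i r) → ‖d‖ ≤ ‖d - z‖ := by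
    intro z hz
    have := hproj z (Set.mem_iInter.2 fun i => Set.mem_iInter.2 fun r => hz i r)
    rwa [sub_zero] at this
  have hchoice : ∀ k : ℕ, ∃ lam : Fin m → Fin K → ℝ,
      (∀ i r, 0 ≤ lam i r) ∧ δ₁ < ‖d - ∑ i, ∑ r, lam i r • f i r‖ ∧
      ∀ i r,
        max (Metric.infDist (d - ∑ i, ∑ r, lam i r • f i r)
              {z : EuclideanSpace ℝ (Fin n) | ⟪z, f i r⟫ ≤ c i r})
            (min (Metric.infDist (d - ∑ i, ∑ r, lam i r • f i r)
              {z : EuclideanSpace ℝ (Fin n) | ⟪z, f i r⟫ = c i r}) (lam i r))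
          ≤ ((k : ℝ) + 1)⁻¹ := by
    intro k
    obtain ⟨lam, h1, h2, h3⟩ := hcon (((k : ℝ) + 1)⁻¹) (by positivity)
    exact ⟨lam, h1, h2, h3⟩
  choose lam hnn hxbig hval using hchoice
  refine aux f hf c d hc hproj' δ₁ hδ₁ lam hnn hxbig (fun k i r => ?_) (fun k i r => ?_)
  · have h := (max_le_iff.1 (hval k i r)).1
    refine inner_sub_le_of_infDist_le' (y0 := 0) (hf i r) ?_ h
    rw [inner_zero_left]; exact hc i r
  · have h := (max_le_iff.1 (hval k i r)).2
    rcases min_le_iff.1 h with h' | h'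
    · exact Or.inr (abs_inner_sub_le_of_infDist_le' (hf i r) h')
    · exact Or.inl h'
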